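/- The 5-dimensional nilpotent commutative associative algebra A₀₁ degenerates to A₀₃: the structure λ of A₀₃ lies in the closure of the GL(5,ℂ)-orbit O(μ) of the structure μ of A₀₁ (closure in the standard topology on the space of bilinear maps ℂ⁵ × ℂ⁵ → ℂ⁵). -/

import Mathlib

set_option maxHeartbeats 1000000
set_option synthInstance.maxHeartbeats 1000000


open ContinuousLinearMap

/-- The underlying space `ℂⁿ`. -/
abbrev Vn (n : ℕ) := Fin n → ℂ

/-- The space of bilinear maps `ℂⁿ × ℂⁿ → ℂⁿ` (as continuous linear maps in two
arguments), carrying its standard topology as a finite-dimensional complex vector space. -/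
abbrev Bil (n : ℕ) := Vn n →L[ℂ] Vn n →L[ℂ] Vn n

/-- The action of `GL(n, ℂ)` on bilinear maps: `(g · μ)(x, y) = g (μ (g⁻¹ x) (g⁻¹ y))`. -/
noncomputable def act {n : ℕ} (g : Vn n ≃L[ℂ] Vn n) (μ : Bil n) : Bil n :=
  ((compL ℂ (Vn n) (Vn n) (Vn n)).flip (g.symm : Vn n →L[ℂ] Vn n)).comp
    (((compL ℂ (Vn n) (Vn n) (Vn n)) (g : Vn n →L[ℂ] Vn n)).comp
      (μ.comp (g.symm : Vn n →L[ℂ] Vn n)))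

@[simp] lemma act_apply {n : ℕ} (g : Vn n ≃L[ℂ] Vn n) (μ : Bil n) (x y : Vn n) :
    act g μ x y = g (μ (g.symm x) (g.symm y)) := rfl

/-- The orbit `O(μ)` of a bilinear map under the `GL(n, ℂ)`-action. -/
noncomputable def orbit {n : ℕ} (μ : Bil n) : Set (Bil n) :=
  {ν | ∃ g : Vn n ≃L[ℂ] Vn n, ν = act g μ}

/-- The standard basis `e₁, …, e₅` of `ℂ⁵` (zero-indexed: `e i` is `e_{i+1}`). -/
def e (i : Fin 5) : Vn 5 := Pi.single i 1

/-- Multiplication table of the algebra `𝐀01` (entry `(i, j)` is `eᵢ · eⱼ`). -/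
def tblA01 : Fin 5 → Fin 5 → Vn 5 :=
  ![![e 1, e 2, e 3, e 4, 0],
   ![e 2, e 3, e 4, 0, 0],
   ![e 3, e 4, 0, 0, 0],
   ![e 4, 0, 0, 0, 0],
   ![0, 0, 0, 0, 0]]

/-- Multiplication table of the algebra `𝐀03` (entry `(i, j)` is `eᵢ · eⱼ`). -/
def tblA03 : Fin 5 → Fin 5 → Vn 5 :=
  ![![e 2, 0, e 4, 0, 0],
   ![0, e 3, 0, e 4, 0],
   ![e 4, 0, 0, 0, 0],
   ![0, e 4, 0, 0, 0],
   ![0, 0, 0, 0, 0]]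

noncomputable def mkBil (T : Fin 5 → Fin 5 → Vn 5) : Bil 5 :=
  ∑ i : Fin 5, ∑ j : Fin 5,
    (ContinuousLinearMap.proj i : Vn 5 →L[ℂ] ℂ).smulRight
      ((ContinuousLinearMap.proj j : Vn 5 →L[ℂ] ℂ).smulRight (T i j))

lemma mkBil_apply (T : Fin 5 → Fin 5 → Vn 5) (x y : Vn 5) :
    mkBil T x y = ∑ i : Fin 5, ∑ j : Fin 5, x i • y j • T i j := by
  simp [mkBil, ContinuousLinearMap.sum_apply, smulRight_apply, proj_apply]

lemma mkBil_e (T : Fin 5 → Fin 5 → Vn 5) (i j : Fin 5) :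
    mkBil T (e i) (e j) = T i j := by
  rw [mkBil_apply]
  simp [e, Pi.single_apply, ite_smul, zero_smul, one_smul]

lemma vec_expand (x : Vn 5) : x = ∑ i : Fin 5, x i • e i := by
  funext k
  simp [e, Finset.sum_apply, Pi.single_apply]

lemma bil_expand (μ : Bil 5) (x y : Vn 5) :
    μ x y = ∑ i : Fin 5, ∑ j : Fin 5, x i • y j • μ (e i) (e j) := by
  conv_lhs => rw [vec_expand x, vec_expand y]
  rw [map_sum]
  simp only [ContinuousLinearMap.sum_apply, map_smul, map_sum,
    ContinuousLinearMap.smul_apply]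
  rw [Finset.sum_comm]
  refine Finset.sum_congr rfl fun i _ => ?_
  rw [Finset.smul_sum]
  exact Finset.sum_congr rfl fun j _ => smul_comm _ _ _

lemma bil_ext {μ ν : Bil 5} (h : ∀ i j, μ (e i) (e j) = ν (e i) (e j)) : μ = ν := by
  apply ContinuousLinearMap.ext; intro x
  apply ContinuousLinearMap.ext; intro y
  rw [bil_expand μ, bil_expand ν]
  exact Finset.sum_congr rfl fun i _ => Finset.sum_congr rfl fun j _ => by rw [h]



noncomputable def Hfun (t : ℂ) (x : Vn 5) : Vn 5 :=
  ![t * x 0 + t * x 1,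
    t * x 1 + t^2 * x 2 + t^2 * x 3,
    t * x 1 + 2 * t^2 * x 3 + t^3 * x 4,
    t * x 1 + 3 * t^2 * x 3,
    t * x 1 + 4 * t^2 * x 3]

noncomputable def Hinvfun (t : ℂ) (y : Vn 5) : Vn 5 :=
  ![(y 0 - 4 * y 3 + 3 * y 4) / t,
    (4 * y 3 - 3 * y 4) / t,
    (y 1 - 3 * y 3 + 2 * y 4) / t^2,
    (y 4 - y 3) / t^2,
    (y 2 - 2 * y 3 + y 4) / t^3]

noncomputable def Hlin (t : ℂ) : Vn 5 →ₗ[ℂ] Vn 5 where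
  toFun := Hfun t
  map_add' x y := by funext k; fin_cases k <;> simp [Hfun] <;> ring
  map_smul' c x := by funext k; fin_cases k <;> simp [Hfun] <;> ring

noncomputable def Hinvlin (t : ℂ) : Vn 5 →ₗ[ℂ] Vn 5 where
  toFun := Hinvfun t
  map_add' x y := by funext k; fin_cases k <;> simp [Hinvfun] <;> ring
  map_smul' c x := by funext k; fin_cases k <;> simp [Hinvfun] <;> ring

lemma Hcomp1 (t : ℂ) (ht : t ≠ 0) : Hlin t ∘ₗ Hinvlin t = LinearMap.id := by
  apply LinearMap.ext; intro x
  funext k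
  fin_cases k <;>
    simp only [LinearMap.comp_apply, Hlin, Hinvlin, LinearMap.coe_mk, AddHom.coe_mk,
      Hfun, Hinvfun, LinearMap.id_apply] <;>
    simp <;> field_simp <;> ring

lemma Hcomp2 (t : ℂ) (ht : t ≠ 0) : Hinvlin t ∘ₗ Hlin t = LinearMap.id := by
  apply LinearMap.ext; intro x
  funext k
  fin_cases k <;>
    simp only [LinearMap.comp_apply, Hlin, Hinvlin, LinearMap.coe_mk, AddHom.coe_mk,
      Hfun, Hinvfun, LinearMap.id_apply] <;>
    simp <;> field_simp <;> ring

noncomputable def Hequiv (t : ℂ) (ht : t ≠ 0) : Vn 5 ≃L[ℂ] Vn 5 :=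
  (LinearEquiv.ofLinear (Hlin t) (Hinvlin t) (Hcomp1 t ht) (Hcomp2 t ht)).toContinuousLinearEquiv

lemma Hequiv_apply (t : ℂ) (ht : t ≠ 0) (x : Vn 5) : Hequiv t ht x = Hfun t x := rfl
lemma Hequiv_symm_apply (t : ℂ) (ht : t ≠ 0) (x : Vn 5) :
    (Hequiv t ht).symm x = Hinvfun t x := rfl

noncomputable def tblD1 : Fin 5 → Fin 5 → Vn 5 :=
  ![
   ![0, ![-1, 1, 0, 0, 0], 0, ![0, 0, 0, 1, 0], ![0, 0, 0, 0, -2]],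
   ![![-1, 1, 0, 0, 0], 0, ![0, 0, -1, 0, 0], ![0, 0, 3, 3, 0], ![0, 0, 0, 0, -1]],
   ![0, ![0, 0, -1, 0, 0], ![0, 0, 0, 0, -2], 0, 0],
   ![![0, 0, 0, 1, 0], ![0, 0, 3, 3, 0], 0, ![0, 0, 0, 0, 2], 0],
   ![![0, 0, 0, 0, -2], ![0, 0, 0, 0, -1], 0, 0, 0]]

noncomputable def tblD2 : Fin 5 → Fin 5 → Vn 5 :=
  ![
   ![0, 0, 0, ![1, -1, 0, 0, 0], ![0, 0, -3, -1, 0]],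
   ![0, 0, ![-1, 1, 0, 0, 0], ![6, -6, 0, 0, 0], ![0, 0, -1, 0, 0]],
   ![0, ![-1, 1, 0, 0, 0], ![0, 0, -3, -1, 0], ![0, 0, 1, 1, 0], ![0, 0, 0, 0, 1]],
   ![![1, -1, 0, 0, 0], ![6, -6, 0, 0, 0], ![0, 0, 1, 1, 0], ![0, 0, 5, 3, 0], ![0, 0, 0, 0, 1]],
   ![![0, 0, -3, -1, 0], ![0, 0, -1, 0, 0], ![0, 0, 0, 0, 1], ![0, 0, 0, 0, 1], 0]]

noncomputable def tblD3 : Fin 5 → Fin 5 → Vn 5 :=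
  ![
   ![0, 0, 0, 0, ![-4, 4, 0, 0, 0]],
   ![0, 0, 0, 0, ![-1, 1, 0, 0, 0]],
   ![0, 0, ![-4, 4, 0, 0, 0], ![2, -2, 0, 0, 0], ![0, 0, 2, 1, 0]],
   ![0, 0, ![2, -2, 0, 0, 0], ![8, -8, 0, 0, 0], ![0, 0, 2, 1, 0]],
   ![![-4, 4, 0, 0, 0], ![-1, 1, 0, 0, 0], ![0, 0, 2, 1, 0], ![0, 0, 2, 1, 0], 0]]

noncomputable def tblD4 : Fin 5 → Fin 5 → Vn 5 :=
  ![
   ![0, 0, 0, 0, 0],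
   ![0, 0, 0, 0, 0],
   ![0, 0, 0, 0, ![3, -3, 0, 0, 0]],
   ![0, 0, 0, 0, ![3, -3, 0, 0, 0]],
   ![0, 0, ![3, -3, 0, 0, 0], ![3, -3, 0, 0, 0], 0]]


noncomputable def Lmap : (Fin 5 → ℂ) →ₗ[ℂ] Bil 5 where
  toFun c := c 0 • mkBil tblA03 + c 1 • mkBil tblD1 + c 2 • mkBil tblD2
    + c 3 • mkBil tblD3 + c 4 • mkBil tblD4
  map_add' a b := by
    simp only [Pi.add_apply]
    module
  map_smul' c a := by
    simp only [Pi.smul_apply, smul_eq_mul, RingHom.id_apply]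
    module

noncomputable def nuc (t : ℂ) : Bil 5 := Lmap ![1, t, t^2, t^3, t^4]

lemma nuc_e (t : ℂ) (i j : Fin 5) :
    nuc t (e i) (e j) = tblA03 i j + t • tblD1 i j + t^2 • tblD2 i j
      + t^3 • tblD3 i j + t^4 • tblD4 i j := by
  simp [nuc, Lmap, mkBil_e, ContinuousLinearMap.add_apply, ContinuousLinearMap.smul_apply]

lemma nuc_cont : Continuous nuc := by
  unfold nuc
  have h : Continuous fun t : ℂ => (![1, t, t^2, t^3, t^4] : Fin 5 → ℂ) := by
    refine continuous_pi fun i => ?_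
    fin_cases i <;> simp <;> continuity
  have hc : Continuous Lmap := by
    haveI : ContinuousAdd (Bil 5) := by
      have := (inferInstance : IsTopologicalAddGroup (Bil 5))
      exact this.toContinuousAdd
    exact LinearMap.continuous_on_pi Lmap
  exact hc.comp h

set_option maxHeartbeats 0 in
lemma nuc_orbit (μ : Bil 5) (hμ : ∀ i j : Fin 5, μ (e i) (e j) = tblA01 i j)
    (t : ℂ) (ht : t ≠ 0) : nuc t ∈ orbit μ := by
  refine ⟨(Hequiv t ht).symm, bil_ext fun i j => ?_⟩
  rw [act_apply]
  simp only [ContinuousLinearEquiv.symm_symm, Hequiv_apply, Hequiv_symm_apply]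
  rw [bil_expand μ]
  simp only [hμ]
  rw [nuc_e]
  fin_cases i <;> fin_cases j <;>
    (funext k
     fin_cases k <;>
       simp [Hfun, Hinvfun, e, tblA01, tblA03, tblD1, tblD2, tblD3, tblD4,
         Fin.sum_univ_five, Finset.sum_apply, Pi.single_apply, Matrix.vecHead,
         Matrix.vecTail, Function.comp] <;>
       (try simp [Fin.ext_iff, show ((4:Fin 5):ℕ) = 4 from rfl]) <;> (try field_simp) <;> (try ring))

/-- The $5$-dimensional nilpotent commutative associative algebra `𝐀01` degenerates to
`𝐀03`: the structure `λ` of `𝐀03` lies in the closure of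
the `GL(5, ℂ)`-orbit `O(μ)` of the structure `μ` of `𝐀01`. -/
theorem A01_deg_A03 (μ lam : Bil 5)
    (hμ : ∀ i j : Fin 5, μ (e i) (e j) = tblA01 i j)
    (hlam : ∀ i j : Fin 5, lam (e i) (e j) = tblA03 i j) :
    lam ∈ closure (orbit μ) := by
  have h0 : lam = nuc 0 := by
    apply bil_ext
    intro i j
    rw [hlam, nuc_e]
    simp
  rw [h0]
  have : Filter.Tendsto nuc (nhdsWithin 0 {0}ᶜ) (nhds (nuc 0)) :=
    (nuc_cont.tendsto 0).mono_left nhdsWithin_le_nhds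
  refine mem_closure_of_tendsto this ?_
  filter_upwards [self_mem_nhdsWithin] with t ht
  exact nuc_orbit μ hμ t ht
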